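/- For positive integers q, n, k with 1 ≤ k ≤ n, the number of elements of C_{n,k} with no cycle of length divisible by q equals f_q(n-k+1) - [(-k) mod q ≤ s]·f_q(n-k), where f_q(n) = ∏_{j=1}^{n} (j - [q ∣ j]) and s = q - 2 - (n mod q). -/

import Mathlib

def cosetC (n k : ℕ) : Set (Equiv.Perm (Fin n)) :=
  {σ | ∃ g : Equiv.Perm (Fin n), (∀ i : Fin n, (i : ℕ) < k - 1 → g i = i) ∧
    σ = g * ((List.finRange n).take k).formPerm}

def NoCycleLenMulOf {n : ℕ} (q : ℕ) (σ : Equiv.Perm (Fin n)) : Prop :=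
  ∀ x : Fin n, ¬ q ∣ Function.minimalPeriod σ x

/-- `f_q(n) = ∏_{j=1}^n (j - [q ∣ j])`. -/
def fq (q n : ℕ) : ℕ := ∏ j ∈ Finset.Icc 1 n, (j - if q ∣ j then 1 else 0)

namespace Stmt8

open Equiv Equiv.Perm Function List

/-- the cycle `(0 1 ... k-1)` in `Perm (Fin n)` -/
def ck (n k : ℕ) : Equiv.Perm (Fin n) := ((List.finRange n).take k).formPerm

/-- pointwise characterization of membership in the coset -/
def Chain (n k : ℕ) (σ : Equiv.Perm (Fin n)) : Prop :=
  ∀ i : Fin n, ((i : ℕ) + 3 ≤ k → ((σ i : ℕ) = (i : ℕ) + 1)) ∧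
    (2 ≤ k → (i : ℕ) + 1 = k → ((σ i : ℕ) = 0))

def Sset (n k q : ℕ) : Set (Equiv.Perm (Fin n)) :=
  {σ | Chain n k σ ∧ NoCycleLenMulOf q σ}

section ckfacts

variable {n k : ℕ}

lemma tl_length (hkn : k ≤ n) : ((List.finRange n).take k).length = k := by
  simp [List.length_take, Nat.min_eq_left hkn]

lemma tl_nodup : ((List.finRange n).take k).Nodup :=
  (List.nodup_finRange n).sublist (List.take_sublist _ _)

lemma tl_get (i : ℕ) (h : i < ((List.finRange n).take k).length) :
    ((List.finRange n).take k)[i] = ⟨i, by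
      have := h; simp [List.length_take] at this; omega⟩ := by
  apply Fin.ext
  simp [List.getElem_take]

lemma tl_mem (hkn : k ≤ n) (x : Fin n) : x ∈ (List.finRange n).take k ↔ (x : ℕ) < k := by
  rw [List.mem_iff_getElem]
  constructor
  · rintro ⟨i, hi, rfl⟩
    rw [tl_get i hi]
    show i < k
    simp [List.length_take] at hi; omega
  · intro hx
    refine ⟨(x : ℕ), ?_, ?_⟩
    · simp [List.length_take]; omega
    · rw [tl_get]

lemma ck_pow_apply (hkn : k ≤ n) (j : ℕ) (x : Fin n) (hx : (x : ℕ) < k) :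
    (((ck n k) ^ j) x : ℕ) = ((x : ℕ) + j) % k := by
  have hlt : (x : ℕ) < ((List.finRange n).take k).length := by rw [tl_length hkn]; exact hx
  have hx' : x = ((List.finRange n).take k)[(x : ℕ)] := by rw [tl_get _ hlt]
  rw [ck]
  conv_lhs => rw [hx']
  rw [List.formPerm_pow_apply_getElem _ tl_nodup j _ hlt, tl_get]
  simp [tl_length hkn]

lemma ck_apply (hkn : k ≤ n) (x : Fin n) (hx : (x : ℕ) < k) :
    ((ck n k) x : ℕ) = ((x : ℕ) + 1) % k := by
  have := ck_pow_apply hkn 1 x hx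
  simpa using this

lemma ck_apply_ge (hkn : k ≤ n) (x : Fin n) (hx : k ≤ (x : ℕ)) : (ck n k) x = x := by
  apply List.formPerm_apply_of_notMem
  rw [tl_mem hkn]; omega

lemma ck_lt_iff (hkn : k ≤ n) (hk : 1 ≤ k) (x : Fin n) :
    ((ck n k) x : ℕ) < k ↔ (x : ℕ) < k := by
  constructor
  · intro h
    by_contra hx
    rw [ck_apply_ge hkn x (by omega)] at h; omega
  · intro h
    rw [ck_apply hkn x h]
    exact Nat.mod_lt _ (by omega)

end ckfacts

/-- membership in cosetC is equivalent to `Chain` -/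
lemma cosetC_iff_chain {n k : ℕ} (hk : 1 ≤ k) (hkn : k ≤ n) (σ : Equiv.Perm (Fin n)) :
    σ ∈ cosetC n k ↔ Chain n k σ := by
  constructor
  · rintro ⟨g, hg, rfl⟩
    intro i
    constructor
    · intro h3
      have hc : ((ck n k) i : ℕ) = (i : ℕ) + 1 := by
        rw [ck_apply hkn i (by omega)]; exact Nat.mod_eq_of_lt (by omega)
      show ((g ((ck n k) i) : ℕ)) = (i : ℕ) + 1
      rw [hg _ (by omega : ((ck n k) i : ℕ) < k - 1)]
      exact hc
    · intro h2 h1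
      have hc : ((ck n k) i : ℕ) = 0 := by
        rw [ck_apply hkn i (by omega)]
        have : ((i : ℕ) + 1) % k = k % k := by rw [h1]
        simpa [Nat.mod_self] using this
      show ((g ((ck n k) i) : ℕ)) = 0
      rw [hg _ (by omega : ((ck n k) i : ℕ) < k - 1)]
      exact hc
  · intro hσ
    refine ⟨σ * (ck n k)⁻¹, ?_, by simp [ck]⟩
    intro x hx
    show σ ((ck n k)⁻¹ x) = x
    by_cases h0 : (x : ℕ) = 0
    · have h2 : 2 ≤ k := by omega
      have hinv : (ck n k)⁻¹ x = ⟨k - 1, by omega⟩ := by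
        rw [Equiv.Perm.inv_eq_iff_eq]
        apply Fin.ext
        rw [ck_apply hkn _ (by simp; omega)]
        have : (k - 1 + 1) % k = 0 := by
          rw [Nat.sub_add_cancel hk]; exact Nat.mod_self k
        simp only [h0]; rw [← this]
      rw [hinv]
      apply Fin.ext
      rw [(hσ ⟨k - 1, by omega⟩).2 h2 (by simp; omega)]
      omega
    · have hinv : (ck n k)⁻¹ x = ⟨(x : ℕ) - 1, by omega⟩ := by
        rw [Equiv.Perm.inv_eq_iff_eq]
        apply Fin.ext
        rw [ck_apply hkn _ (by simp; omega)]
        show (x : ℕ) = ((x : ℕ) - 1 + 1) % k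
        rw [Nat.sub_add_cancel (by omega), Nat.mod_eq_of_lt (by omega)]
      rw [hinv]
      apply Fin.ext
      rw [(hσ ⟨(x : ℕ) - 1, by omega⟩).1 (by simp; omega)]
      simp; omega


section mp

lemma perm_mp_eq {α β : Type*} {σ : Equiv.Perm α} {τ : Equiv.Perm β} {x : α} {y : β}
    (h : ∀ j : ℕ, (σ ^ j) x = x ↔ (τ ^ j) y = y) :
    Function.minimalPeriod σ x = Function.minimalPeriod τ y := by
  rw [Function.minimalPeriod_eq_minimalPeriod_iff]
  intro j
  simp only [Function.IsPeriodicPt, Function.IsFixedPt, Equiv.Perm.iterate_eq_pow]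
  exact h j

lemma conj_pow'' {G : Type*} [Group G] (a b : G) (j : ℕ) :
    (a * b * a⁻¹) ^ j = a * b ^ j * a⁻¹ := by
  induction j with
  | zero => simp
  | succ m ih => rw [pow_succ, ih, pow_succ]; group

lemma mp_conj {α : Type*} (ρ σ : Equiv.Perm α) (x : α) :
    Function.minimalPeriod ⇑(ρ * σ * ρ⁻¹) (ρ x) = Function.minimalPeriod ⇑σ x := by
  apply perm_mp_eq
  intro j
  rw [conj_pow'']
  simp [Equiv.Perm.mul_apply]

lemma noq_conj {n : ℕ} (q : ℕ) (ρ σ : Equiv.Perm (Fin n)) :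
    NoCycleLenMulOf q (ρ * σ * ρ⁻¹) ↔ NoCycleLenMulOf q σ := by
  constructor
  · intro h x
    have := h (ρ x)
    rwa [mp_conj] at this
  · intro h x
    have h2 := mp_conj ρ σ (ρ⁻¹ x)
    rw [(show ∀ (e : Equiv.Perm (Fin n)) y, e (e⁻¹ y) = y from fun e y => e.apply_symm_apply y)] at h2
    rw [h2]
    exact h _

lemma key_mod {k : ℕ} (hk : 1 ≤ k) (x j : ℕ) (hx : x < k) :
    (x + j) % k = x ↔ k ∣ j := by
  rw [Nat.add_mod, Nat.mod_eq_of_lt hx, Nat.dvd_iff_mod_eq_zero]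
  have hr : j % k < k := Nat.mod_lt _ (by omega)
  rcases Nat.lt_or_ge (x + j % k) k with h2 | h2
  · rw [Nat.mod_eq_of_lt h2]; omega
  · rw [Nat.mod_eq_sub_mod h2, Nat.mod_eq_of_lt (by omega)]; omega

lemma pow_agree {n k : ℕ} (hk : 1 ≤ k) (hkn : k ≤ n) (σ : Equiv.Perm (Fin n))
    (hagree : ∀ x : Fin n, (x : ℕ) < k → σ x = ck n k x) (j : ℕ) :
    ∀ x : Fin n, (x : ℕ) < k → (σ ^ j) x = (ck n k ^ j) x := by
  induction j with
  | zero => intro x hx; simp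
  | succ m ih =>
    intro x hx
    rw [pow_succ, pow_succ, Equiv.Perm.mul_apply, Equiv.Perm.mul_apply, hagree x hx]
    exact ih _ (by rw [ck_lt_iff hkn hk]; exact hx)

lemma mp_close {n k : ℕ} (hk : 1 ≤ k) (hkn : k ≤ n) (σ : Equiv.Perm (Fin n))
    (hagree : ∀ x : Fin n, (x : ℕ) < k → σ x = ck n k x) (x : Fin n) (hx : (x : ℕ) < k) :
    Function.minimalPeriod ⇑σ x = k := by
  have hper : ∀ j : ℕ, (σ ^ j) x = x ↔ k ∣ j := by
    intro j
    rw [pow_agree hk hkn σ hagree j x hx, Fin.ext_iff, ck_pow_apply hkn j x hx]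
    exact key_mod hk _ j hx
  have h1 : Function.IsPeriodicPt ⇑σ k x := by
    show σ ^[k] x = x
    rw [Equiv.Perm.iterate_eq_pow]
    exact (hper k).2 dvd_rfl
  refine Nat.dvd_antisymm (Function.IsPeriodicPt.minimalPeriod_dvd h1) ?_
  have h2 := Function.isPeriodicPt_minimalPeriod ⇑σ x
  rw [Function.IsPeriodicPt, Function.IsFixedPt, Equiv.Perm.iterate_eq_pow] at h2
  exact (hper _).1 h2

end mp


section closing

variable {n k q : ℕ}

def phi (n k : ℕ) (hkn : k ≤ n) : Fin (n - k) ≃ {x : Fin n // k ≤ (x : ℕ)} where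
  toFun j := ⟨⟨k + (j : ℕ), by have := j.isLt; omega⟩, Nat.le_add_right _ _⟩
  invFun x := ⟨(x : ℕ) - k, by have := x.1.isLt; have := x.2; omega⟩
  left_inv j := by apply Fin.ext; simp
  right_inv x := by
    apply Subtype.ext; apply Fin.ext
    have := x.2; simp; omega

def Psi (hkn : k ≤ n) (τ : Equiv.Perm (Fin (n - k))) : Equiv.Perm (Fin n) :=
  Equiv.Perm.extendDomain τ (phi n k hkn) * ck n k

lemma ext_apply_lt (hkn : k ≤ n) (τ : Equiv.Perm (Fin (n - k))) (x : Fin n)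
    (hx : (x : ℕ) < k) : Equiv.Perm.extendDomain τ (phi n k hkn) x = x :=
  Equiv.Perm.extendDomain_apply_not_subtype _ _ (by omega)

lemma ext_apply_ge (hkn : k ≤ n) (τ : Equiv.Perm (Fin (n - k))) (x : Fin n)
    (hx : k ≤ (x : ℕ)) :
    Equiv.Perm.extendDomain τ (phi n k hkn) x =
      ((phi n k hkn) (τ ((phi n k hkn).symm ⟨x, hx⟩)) : {x : Fin n // k ≤ (x : ℕ)}) := by
  exact Equiv.Perm.extendDomain_apply_subtype τ (phi n k hkn) hx

lemma ext_apply_ge_ge (hkn : k ≤ n) (τ : Equiv.Perm (Fin (n - k))) (x : Fin n)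
    (hx : k ≤ (x : ℕ)) : k ≤ (Equiv.Perm.extendDomain τ (phi n k hkn) x : ℕ) := by
  rw [ext_apply_ge hkn τ x hx]
  exact ((phi n k hkn) (τ ((phi n k hkn).symm ⟨x, hx⟩))).2

lemma Psi_agree (hk : 1 ≤ k) (hkn : k ≤ n) (τ : Equiv.Perm (Fin (n - k))) (x : Fin n)
    (hx : (x : ℕ) < k) : Psi hkn τ x = ck n k x := by
  show Equiv.Perm.extendDomain τ (phi n k hkn) (ck n k x) = ck n k x
  exact ext_apply_lt hkn τ _ (by rw [ck_lt_iff hkn hk]; exact hx)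

lemma Psi_apply_ge (hkn : k ≤ n) (τ : Equiv.Perm (Fin (n - k))) (x : Fin n)
    (hx : k ≤ (x : ℕ)) :
    Psi hkn τ x = Equiv.Perm.extendDomain τ (phi n k hkn) x := by
  show Equiv.Perm.extendDomain τ (phi n k hkn) (ck n k x) = _
  rw [ck_apply_ge hkn x hx]

lemma Psi_pow_ge (hkn : k ≤ n) (τ : Equiv.Perm (Fin (n - k))) (j : ℕ) :
    ∀ x : Fin n, k ≤ (x : ℕ) →
      ((Psi hkn τ) ^ j) x = (Equiv.Perm.extendDomain (τ ^ j) (phi n k hkn)) x := by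
  induction j with
  | zero => intro x hx; simp
  | succ m ih =>
    intro x hx
    rw [pow_succ, Equiv.Perm.mul_apply, Psi_apply_ge hkn τ x hx,
      ih _ (ext_apply_ge_ge hkn τ x hx), pow_succ, ← Equiv.Perm.extendDomain_mul]
    rfl

lemma mp_Psi_ge (hkn : k ≤ n) (τ : Equiv.Perm (Fin (n - k))) (x : Fin n) (hx : k ≤ (x : ℕ)) :
    Function.minimalPeriod ⇑(Psi hkn τ) x =
      Function.minimalPeriod ⇑τ ((phi n k hkn).symm ⟨x, hx⟩) := by
  apply perm_mp_eq
  intro j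
  rw [Psi_pow_ge hkn τ j x hx, ext_apply_ge hkn (τ ^ j) x hx]
  constructor
  · intro h
    apply (phi n k hkn).injective
    apply Subtype.ext
    rw [h]
    simp
  · intro h
    rw [h]
    simp
  
lemma noq_Psi (hq : 0 < q) (hk : 1 ≤ k) (hkn : k ≤ n) (τ : Equiv.Perm (Fin (n - k))) :
    NoCycleLenMulOf q (Psi hkn τ) ↔ (¬ q ∣ k) ∧ NoCycleLenMulOf q τ := by
  constructor
  · intro h
    constructor
    · have := h ⟨0, by omega⟩
      rwa [mp_close hk hkn _ (Psi_agree hk hkn τ) _ (by simp; omega)] at this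
    · intro x
      have hx : k ≤ ((((phi n k hkn) x) : Fin n) : ℕ) := ((phi n k hkn) x).2
      have := h ((phi n k hkn) x)
      rwa [mp_Psi_ge hkn τ _ hx, Subtype.coe_eta, Equiv.symm_apply_apply] at this
  · rintro ⟨hqk, hτ⟩ x
    rcases Nat.lt_or_ge (x : ℕ) k with hx | hx
    · rwa [mp_close hk hkn _ (Psi_agree hk hkn τ) _ hx]
    · rw [mp_Psi_ge hkn τ x hx]
      exact hτ _

lemma Psi_inj (hkn : k ≤ n) : Function.Injective (Psi hkn) := by
  intro τ1 τ2 h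
  have h2 : Equiv.Perm.extendDomain τ1 (phi n k hkn) = Equiv.Perm.extendDomain τ2 (phi n k hkn) :=
    mul_right_cancel h
  ext j
  have h3 : (phi n k hkn) (τ1 j) = (phi n k hkn) (τ2 j) := by
    have t1 := Equiv.Perm.extendDomain_apply_image τ1 (phi n k hkn) j
    have t2 := Equiv.Perm.extendDomain_apply_image τ2 (phi n k hkn) j
    apply Subtype.ext
    rw [← t1, ← t2, h2]
  have h4 := (phi n k hkn).injective h3
  exact congrArg Fin.val h4

end closing


section closecard

variable {n k q : ℕ}

lemma Sset_one {m q : ℕ} : Sset m 1 q = {τ | NoCycleLenMulOf q τ} := by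
  ext τ
  simp only [Sset, Set.mem_setOf_eq, Chain, and_iff_right_iff_imp]
  intro _
  exact fun i => ⟨by omega, by omega⟩

lemma close_agree (hk : 1 ≤ k) (hkn : k ≤ n) (σ : Equiv.Perm (Fin n)) (hch : Chain n k σ)
    (hcl : ((σ ⟨k - 2, by omega⟩ : Fin n) : ℕ) = k - 1) :
    ∀ x : Fin n, (x : ℕ) < k → σ x = ck n k x := by
  intro x hx
  apply Fin.ext
  rw [ck_apply hkn x hx]
  rcases Nat.lt_or_ge ((x : ℕ) + 2) k with h3 | h3
  · rw [(hch x).1 (by omega), Nat.mod_eq_of_lt (by omega)]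
  · rcases Nat.lt_or_ge ((x : ℕ) + 1) k with h2 | h2
    · -- x = k - 2
      have hx2 : x = ⟨k - 2, by omega⟩ := Fin.ext (by simp; omega)
      have hv : ((σ x : Fin n) : ℕ) = k - 1 := by rw [hx2]; exact hcl
      rw [hv, Nat.mod_eq_of_lt (by omega)]
      omega
    · -- x + 1 = k
      have h1 : (x : ℕ) + 1 = k := by omega
      rcases Nat.lt_or_ge k 2 with hk2 | hk2
      · -- k = 1, x = 0
        have hx2 : x = ⟨k - 2, by omega⟩ := Fin.ext (by simp; omega)
        have hv : ((σ x : Fin n) : ℕ) = k - 1 := by rw [hx2]; exact hcl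
        rw [hv, h1, Nat.mod_self]
        omega
      · rw [(hch x).2 hk2 h1, h1, Nat.mod_self]

lemma close_mem_image (hk : 1 ≤ k) (hkn : k ≤ n) (σ : Equiv.Perm (Fin n))
    (hσ : σ ∈ Sset n k q)
    (hcl : ((σ ⟨k - 2, by omega⟩ : Fin n) : ℕ) = k - 1) :
    ∃ τ, NoCycleLenMulOf q τ ∧ Psi hkn τ = σ := by
  have hagree := close_agree hk hkn σ hσ.1 hcl
  set g := σ * (ck n k)⁻¹ with hgdef
  have hgfix : ∀ x : Fin n, (x : ℕ) < k → g x = x := by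
    intro x hx
    show σ ((ck n k)⁻¹ x) = x
    have hy : (((ck n k)⁻¹ x : Fin n) : ℕ) < k := by
      by_contra hge
      have hthis := ck_apply_ge hkn ((ck n k)⁻¹ x) (by omega)
      rw [(show ∀ (e : Equiv.Perm (Fin n)) y, e (e⁻¹ y) = y from fun e y => e.apply_symm_apply y)] at hthis
      rw [← hthis] at hge
      exact hge hx
    rw [hagree _ hy, (show ∀ (e : Equiv.Perm (Fin n)) y, e (e⁻¹ y) = y from fun e y => e.apply_symm_apply y)]
  have hmapsto : ∀ x : Fin n, k ≤ (x : ℕ) ↔ k ≤ ((g x : Fin n) : ℕ) := by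
    intro x
    constructor
    · intro hx
      by_contra h'
      push_neg at h'
      have h2 := hgfix (g x) h'
      have h3 := g.injective h2
      rw [h3] at h'
      omega
    · intro hx
      by_contra h'
      push_neg at h'
      rw [hgfix x h'] at hx
      omega
  let τ : Equiv.Perm (Fin (n - k)) :=
    (phi n k hkn).symm.permCongr (g.subtypePerm (fun x => (hmapsto x).symm))
  have hg_eq : Equiv.Perm.extendDomain τ (phi n k hkn) = g := by
    apply Equiv.ext
    intro x
    rcases Nat.lt_or_ge (x : ℕ) k with hx | hx
    · rw [ext_apply_lt hkn τ x hx, hgfix x hx]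
    · rw [ext_apply_ge hkn τ x hx]
      show (((phi n k hkn) ((phi n k hkn).symm.permCongr (g.subtypePerm (fun x => (hmapsto x).symm))
        ((phi n k hkn).symm ⟨x, hx⟩)) : {x : Fin n // k ≤ (x : ℕ)}) : Fin n) = g x
      rw [Equiv.permCongr_apply]
      simp only [Equiv.symm_symm, Equiv.apply_symm_apply]
      rfl
  have hPsi : Psi hkn τ = σ := by
    show Equiv.Perm.extendDomain τ (phi n k hkn) * ck n k = σ
    rw [hg_eq, hgdef, inv_mul_cancel_right]
  refine ⟨τ, ?_, hPsi⟩
  intro j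
  have hnq := hσ.2 (((phi n k hkn) j : {x : Fin n // k ≤ (x : ℕ)}) : Fin n)
  rw [← hPsi, mp_Psi_ge hkn τ _ ((phi n k hkn) j).2, Subtype.coe_eta,
    Equiv.symm_apply_apply] at hnq
  exact hnq

lemma close_card (hq : 0 < q) (hk : 1 ≤ k) (hkn : k ≤ n) :
    {σ : Equiv.Perm (Fin n) | σ ∈ Sset n k q ∧
        ((σ ⟨k - 2, by omega⟩ : Fin n) : ℕ) = k - 1}.ncard
      = if q ∣ k then 0 else (Sset (n - k) 1 q).ncard := by
  split
  case isTrue hqk =>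
    have hempty : {σ : Equiv.Perm (Fin n) | σ ∈ Sset n k q ∧
        ((σ ⟨k - 2, by omega⟩ : Fin n) : ℕ) = k - 1} = ∅ := by
      ext σ
      simp only [Set.mem_setOf_eq, Set.mem_empty_iff_false, iff_false, not_and]
      intro hσ hcl
      have hnq := hσ.2 ⟨0, by omega⟩
      rw [mp_close hk hkn σ (close_agree hk hkn σ hσ.1 hcl) _ (by simp; omega)] at hnq
      exact hnq hqk
    rw [hempty, Set.ncard_empty]
  case isFalse hqk =>
    have himg : {σ : Equiv.Perm (Fin n) | σ ∈ Sset n k q ∧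
        ((σ ⟨k - 2, by omega⟩ : Fin n) : ℕ) = k - 1} = (Psi hkn) '' (Sset (n - k) 1 q) := by
      ext σ
      constructor
      · rintro ⟨hσ, hcl⟩
        obtain ⟨τ, hτ, hPsi⟩ := close_mem_image hk hkn σ hσ hcl
        exact ⟨τ, by rw [Sset_one]; exact hτ, hPsi⟩
      · rintro ⟨τ, hτ, rfl⟩
        rw [Sset_one] at hτ
        refine ⟨⟨?_, (noq_Psi hq hk hkn τ).mpr ⟨hqk, hτ⟩⟩, ?_⟩
        · intro i
          constructor
          · intro h3
            rw [Psi_agree hk hkn τ i (by omega), ck_apply hkn i (by omega),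
              Nat.mod_eq_of_lt (by omega)]
          · intro h2 h1
            rw [Psi_agree hk hkn τ i (by omega), ck_apply hkn i (by omega), h1, Nat.mod_self]
        · rw [Psi_agree hk hkn τ _ (by simp; omega), ck_apply hkn _ (by simp; omega)]
          show (k - 2 + 1) % k = k - 1
          rcases Nat.lt_or_ge k 2 with hk2 | hk2
          · have : k = 1 := by omega
            subst this
            rfl
          · rw [Nat.mod_eq_of_lt (by omega)]
            omega
    rw [himg, Set.ncard_image_of_injective _ (Psi_inj hkn)]

end closecard


section openfiber

variable {n k q : ℕ}

def rho (n k : ℕ) (hk : 1 ≤ k) (hkn : k < n) (y : Fin n) : Equiv.Perm (Fin n) :=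
  Equiv.swap ⟨k - 1, by omega⟩ ⟨k, hkn⟩ * Equiv.swap ⟨k, hkn⟩ y

lemma rho_small (hk : 1 ≤ k) (hkn : k < n) (y : Fin n) (hy : k ≤ (y : ℕ))
    (x : Fin n) (hx : (x : ℕ) < k - 1) : rho n k hk hkn y x = x := by
  have hB : Equiv.swap ⟨k, hkn⟩ y x = x :=
    Equiv.swap_apply_of_ne_of_ne (Fin.ne_of_val_ne (show (x : ℕ) ≠ k by omega))
      (Fin.ne_of_val_ne (by omega))
  show Equiv.swap ⟨k - 1, by omega⟩ ⟨k, hkn⟩ (Equiv.swap ⟨k, hkn⟩ y x) = x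
  rw [hB]
  exact Equiv.swap_apply_of_ne_of_ne (Fin.ne_of_val_ne (show (x : ℕ) ≠ k - 1 by omega))
    (Fin.ne_of_val_ne (show (x : ℕ) ≠ k by omega))

lemma rho_km1 (hk : 1 ≤ k) (hkn : k < n) (y : Fin n) (hy : k ≤ (y : ℕ)) :
    rho n k hk hkn y ⟨k - 1, by omega⟩ = ⟨k, hkn⟩ := by
  have hB : Equiv.swap ⟨k, hkn⟩ y ⟨k - 1, by omega⟩ = ⟨k - 1, by omega⟩ :=
    Equiv.swap_apply_of_ne_of_ne (Fin.ne_of_val_ne (show k - 1 ≠ k by omega))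
      (Fin.ne_of_val_ne (show k - 1 ≠ (y : ℕ) by omega))
  show Equiv.swap ⟨k - 1, by omega⟩ ⟨k, hkn⟩ (Equiv.swap ⟨k, hkn⟩ y ⟨k - 1, by omega⟩) = _
  rw [hB]
  exact Equiv.swap_apply_left _ _

lemma rho_y (hk : 1 ≤ k) (hkn : k < n) (y : Fin n) (hy : k ≤ (y : ℕ)) :
    rho n k hk hkn y y = ⟨k - 1, by omega⟩ := by
  show Equiv.swap ⟨k - 1, by omega⟩ ⟨k, hkn⟩ (Equiv.swap ⟨k, hkn⟩ y y) = _
  rw [Equiv.swap_apply_right]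
  exact Equiv.swap_apply_right _ _

lemma rho_inv_small (hk : 1 ≤ k) (hkn : k < n) (y : Fin n) (hy : k ≤ (y : ℕ))
    (x : Fin n) (hx : (x : ℕ) < k - 1) : (rho n k hk hkn y)⁻¹ x = x := by
  rw [Equiv.Perm.inv_eq_iff_eq, rho_small hk hkn y hy x hx]

lemma rho_inv_k (hk : 1 ≤ k) (hkn : k < n) (y : Fin n) (hy : k ≤ (y : ℕ)) :
    (rho n k hk hkn y)⁻¹ ⟨k, hkn⟩ = ⟨k - 1, by omega⟩ := by
  rw [Equiv.Perm.inv_eq_iff_eq, rho_km1 hk hkn y hy]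

lemma rho_inv_km1 (hk : 1 ≤ k) (hkn : k < n) (y : Fin n) (hy : k ≤ (y : ℕ)) :
    (rho n k hk hkn y)⁻¹ ⟨k - 1, by omega⟩ = y := by
  rw [Equiv.Perm.inv_eq_iff_eq, rho_y hk hkn y hy]

lemma open_fiber (hq : 0 < q) (hk : 1 ≤ k) (hkn : k < n) (y : Fin n) (hy : k ≤ (y : ℕ)) :
    {σ : Equiv.Perm (Fin n) | σ ∈ Sset n k q ∧ σ ⟨k - 2, by omega⟩ = y}
      = (fun τ => (rho n k hk hkn y)⁻¹ * τ * rho n k hk hkn y) '' Sset n (k + 1) q := by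
  set ρ := rho n k hk hkn y with hρ
  ext σ
  constructor
  · rintro ⟨⟨hch, hnq⟩, hfib⟩
    refine ⟨ρ * σ * ρ⁻¹, ⟨?_, ?_⟩, by group⟩
    · intro i
      constructor
      · intro h3
        show ((ρ (σ (ρ⁻¹ i))) : ℕ) = (i : ℕ) + 1
        have hρi : ρ⁻¹ i = i := rho_inv_small hk hkn y hy i (by omega)
        rw [hρi]
        rcases Nat.lt_or_ge ((i : ℕ) + 3) (k + 1) with h4 | h4
        · -- i + 3 ≤ k
          have hσi : σ i = ⟨(i : ℕ) + 1, by omega⟩ := Fin.ext ((hch i).1 (by omega))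
          rw [hσi, rho_small hk hkn y hy _ (show (i : ℕ) + 1 < k - 1 by omega)]
        · -- i = k - 2
          have hσi : σ i = y := by
            have hie : i = (⟨k - 2, by omega⟩ : Fin n) := Fin.ext (show (i : ℕ) = k - 2 by omega)
            rw [hie]; exact hfib
          rw [hσi, rho_y hk hkn y hy]
          show k - 1 = (i : ℕ) + 1
          omega
      · intro h2 h1
        -- i = k
        show ((ρ (σ (ρ⁻¹ i))) : ℕ) = 0
        have hik : i = (⟨k, hkn⟩ : Fin n) := Fin.ext (show (i : ℕ) = k by omega)
        rw [hik, rho_inv_k hk hkn y hy]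
        rcases Nat.lt_or_ge k 2 with hk2 | hk2
        · -- k = 1
          have hσi : σ ⟨k - 1, by omega⟩ = y := by
            have hie : (⟨k - 1, by omega⟩ : Fin n) = (⟨k - 2, by omega⟩ : Fin n) :=
              Fin.ext (show k - 1 = k - 2 by omega)
            rw [hie]; exact hfib
          rw [hσi, rho_y hk hkn y hy]
          show k - 1 = 0
          omega
        · have hσi : σ ⟨k - 1, by omega⟩ = ⟨0, by omega⟩ :=
            Fin.ext ((hch _).2 hk2 (show (k - 1 : ℕ) + 1 = k by omega))
          rw [hσi, rho_small hk hkn y hy _ (show (0 : ℕ) < k - 1 by omega)]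
    · rw [hρ]
      exact (noq_conj q _ σ).mpr hnq
  · rintro ⟨τ, ⟨hch, hnq⟩, rfl⟩
    refine ⟨⟨?_, ?_⟩, ?_⟩
    · intro i
      constructor
      · intro h3
        show ((ρ⁻¹ (τ (ρ i))) : ℕ) = (i : ℕ) + 1
        rw [rho_small hk hkn y hy i (by omega)]
        have hτi : τ i = ⟨(i : ℕ) + 1, by omega⟩ := Fin.ext ((hch i).1 (by omega))
        rw [hτi, rho_inv_small hk hkn y hy _ (show (i : ℕ) + 1 < k - 1 by omega)]
      · intro h2 h1
        show ((ρ⁻¹ (τ (ρ i))) : ℕ) = 0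
        have hik : i = (⟨k - 1, by omega⟩ : Fin n) := Fin.ext (show (i : ℕ) = k - 1 by omega)
        rw [hik, rho_km1 hk hkn y hy]
        have hτk : τ ⟨k, hkn⟩ = ⟨0, by omega⟩ :=
          Fin.ext ((hch _).2 (by omega) (show (k : ℕ) + 1 = k + 1 by omega))
        rw [hτk, rho_inv_small hk hkn y hy _ (show (0 : ℕ) < k - 1 by omega)]
    · have h2 := noq_conj q ρ⁻¹ τ
      rw [inv_inv] at h2
      exact h2.mpr hnq
    · show ρ⁻¹ (τ (ρ ⟨k - 2, by omega⟩)) = y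
      have hτv : τ (ρ ⟨k - 2, by omega⟩) = ⟨k - 1, by omega⟩ := by
        rcases Nat.lt_or_ge k 2 with hk2 | hk2
        · have hie : (⟨k - 2, by omega⟩ : Fin n) = (⟨k - 1, by omega⟩ : Fin n) :=
            Fin.ext (show k - 2 = k - 1 by omega)
          rw [hie, rho_km1 hk hkn y hy]
          apply Fin.ext
          rw [(hch _).2 (by omega) (show (k : ℕ) + 1 = k + 1 from rfl)]
          show (0 : ℕ) = k - 1
          omega
        · rw [rho_small hk hkn y hy _ (show k - 2 < k - 1 by omega)]
          apply Fin.ext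
          rw [(hch _).1 (show (k - 2 : ℕ) + 3 ≤ k + 1 by omega)]
          show k - 2 + 1 = k - 1
          omega
      rw [hτv, rho_inv_km1 hk hkn y hy]

lemma open_fiber_card (hq : 0 < q) (hk : 1 ≤ k) (hkn : k < n) (y : Fin n) (hy : k ≤ (y : ℕ)) :
    {σ : Equiv.Perm (Fin n) | σ ∈ Sset n k q ∧ σ ⟨k - 2, by omega⟩ = y}.ncard
      = (Sset n (k + 1) q).ncard := by
  rw [open_fiber hq hk hkn y hy]
  apply Set.ncard_image_of_injective
  intro a b hab
  have hab' : (rho n k hk hkn y)⁻¹ * a * rho n k hk hkn y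
      = (rho n k hk hkn y)⁻¹ * b * rho n k hk hkn y := hab
  exact mul_left_cancel (mul_right_cancel hab')

lemma empty_fiber (hq : 0 < q) (hk : 1 ≤ k) (hkn : k ≤ n) (y : Fin n) (hy : (y : ℕ) < k - 1) :
    {σ : Equiv.Perm (Fin n) | σ ∈ Sset n k q ∧ σ ⟨k - 2, by omega⟩ = y} = ∅ := by
  have hk2 : 2 ≤ k := by omega
  ext σ
  simp only [Set.mem_setOf_eq, Set.mem_empty_iff_false, iff_false, not_and]
  rintro ⟨hch, hnq⟩ hfib
  rcases Nat.eq_zero_or_pos (y : ℕ) with hy0 | hy0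
  · -- y = 0; σ ⟨k-1⟩ = 0 as well
    have h1 : σ ⟨k - 1, by omega⟩ = y := by
      apply Fin.ext
      rw [(hch _).2 hk2 (show (k - 1 : ℕ) + 1 = k by omega)]
      omega
    have h2 := σ.injective (hfib.trans h1.symm)
    have h3 := congrArg Fin.val h2
    have h4 : (k - 2 : ℕ) = k - 1 := h3
    omega
  · -- 1 ≤ y ≤ k - 2 : σ ⟨y-1⟩ = y
    have h1 : σ ⟨(y : ℕ) - 1, by omega⟩ = y := by
      apply Fin.ext
      rw [(hch _).1 (show ((y : ℕ) - 1) + 3 ≤ k by omega)]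
      show (y : ℕ) - 1 + 1 = (y : ℕ)
      omega
    have h2 := σ.injective (hfib.trans h1.symm)
    have h3 := congrArg Fin.val h2
    have h4 : (k - 2 : ℕ) = (y : ℕ) - 1 := h3
    omega

end openfiber


section countrec

variable {n k q : ℕ}

lemma Sset_base (hq : 0 < q) (hn : 1 ≤ n) :
    (Sset n n q).ncard = if q ∣ n then 0 else 1 := by
  have hsub : ∀ σ ∈ Sset n n q, ∀ x : Fin n, σ x = ck n n x := by
    intro σ hσ
    have hcl : ((σ ⟨n - 2, by omega⟩ : Fin n) : ℕ) = n - 1 := by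
      by_contra hne
      have hlt : ((σ ⟨n - 2, by omega⟩ : Fin n) : ℕ) < n - 1 := by
        have := (σ ⟨n - 2, by omega⟩).isLt
        omega
      have hemp := empty_fiber hq hn (le_refl n) (σ ⟨n - 2, by omega⟩) hlt
      have : σ ∈ {σ' : Equiv.Perm (Fin n) | σ' ∈ Sset n n q ∧
          σ' ⟨n - 2, by omega⟩ = σ ⟨n - 2, by omega⟩} := ⟨hσ, rfl⟩
      rw [hemp] at this
      exact this
    exact fun x => close_agree hn (le_refl n) σ hσ.1 hcl x x.isLt
  by_cases hqn : q ∣ n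
  · rw [if_pos hqn]
    have hemp : Sset n n q = ∅ := by
      ext σ
      simp only [Set.mem_empty_iff_false, iff_false]
      intro hσ
      have hmp := mp_close hn (le_refl n) σ (fun x hx => hsub σ hσ x) ⟨0, by omega⟩
        (by simp; omega)
      have := hσ.2 ⟨0, by omega⟩
      rw [hmp] at this
      exact this hqn
    rw [hemp, Set.ncard_empty]
  · rw [if_neg hqn]
    have hsing : Sset n n q = {ck n n} := by
      ext σ
      constructor
      · intro hσ
        exact Equiv.ext (hsub σ hσ)
      · rintro rfl
        refine ⟨?_, ?_⟩
        · intro i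
          constructor
          · intro h3
            rw [ck_apply (le_refl n) i i.isLt, Nat.mod_eq_of_lt (by omega)]
          · intro h2 h1
            rw [ck_apply (le_refl n) i i.isLt, h1, Nat.mod_self]
        · intro x
          rw [mp_close hn (le_refl n) _ (fun x hx => rfl) x x.isLt]
          exact hqn
    rw [hsing, Set.ncard_singleton]

lemma Sset_step (hq : 0 < q) (hk : 1 ≤ k) (hkn : k < n) :
    (Sset n k q).ncard
      = (if q ∣ k then 0 else (Sset (n - k) 1 q).ncard)
        + (n - k) * (Sset n (k + 1) q).ncard := by
  classical
  have hkN : k ≤ n := le_of_lt hkn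
  have hfin : (Sset n k q).Finite := Set.toFinite _
  rw [Set.ncard_eq_toFinset_card _ hfin]
  rw [Finset.card_eq_sum_card_fiberwise
    (f := fun σ => σ (⟨k - 2, by omega⟩ : Fin n)) (t := Finset.univ)
    (fun σ _ => Finset.mem_univ _)]
  have hfib : ∀ y : Fin n,
      (hfin.toFinset.filter (fun σ => σ (⟨k - 2, by omega⟩ : Fin n) = y)).card
      = (if (y : ℕ) + 1 = k then (if q ∣ k then 0 else (Sset (n - k) 1 q).ncard)
          else if k ≤ (y : ℕ) then (Sset n (k + 1) q).ncard else 0) := by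
    intro y
    have hcard : (hfin.toFinset.filter (fun σ => σ (⟨k - 2, by omega⟩ : Fin n) = y)).card
        = {σ : Equiv.Perm (Fin n) | σ ∈ Sset n k q ∧ σ ⟨k - 2, by omega⟩ = y}.ncard := by
      rw [← Set.ncard_coe_finset]
      congr 1
      ext σ
      simp only [Finset.coe_filter, Set.Finite.mem_toFinset, Set.mem_setOf_eq]
    rw [hcard]
    by_cases h1 : (y : ℕ) + 1 = k
    · rw [if_pos h1]
      have hconv : {σ : Equiv.Perm (Fin n) | σ ∈ Sset n k q ∧ σ ⟨k - 2, by omega⟩ = y}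
          = {σ : Equiv.Perm (Fin n) | σ ∈ Sset n k q ∧
              ((σ ⟨k - 2, by omega⟩ : Fin n) : ℕ) = k - 1} := by
        ext σ
        constructor
        · rintro ⟨hσ, hv⟩
          exact ⟨hσ, by rw [hv]; omega⟩
        · rintro ⟨hσ, hv⟩
          exact ⟨hσ, Fin.ext (by rw [hv]; omega)⟩
      rw [hconv, close_card hq hk hkN]
    · rw [if_neg h1]
      by_cases h2 : k ≤ (y : ℕ)
      · rw [if_pos h2]
        exact open_fiber_card hq hk hkn y h2
      · rw [if_neg h2]
        rw [empty_fiber hq hk hkN y (by omega), Set.ncard_empty]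
  rw [Finset.sum_congr rfl (fun y _ => hfib y)]
  have hsplit : ∀ y : Fin n,
      (if (y : ℕ) + 1 = k then (if q ∣ k then 0 else (Sset (n - k) 1 q).ncard)
          else if k ≤ (y : ℕ) then (Sset n (k + 1) q).ncard else 0)
      = (if y = (⟨k - 1, by omega⟩ : Fin n)
            then (if q ∣ k then 0 else (Sset (n - k) 1 q).ncard) else 0)
        + (if k ≤ (y : ℕ) then (Sset n (k + 1) q).ncard else 0) := by
    intro y
    by_cases hy1 : (y : ℕ) + 1 = k
    · rw [if_pos hy1, if_pos (Fin.ext (show (y : ℕ) = k - 1 by omega)),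
        if_neg (show ¬ k ≤ (y : ℕ) by omega), add_zero]
    · rw [if_neg hy1, if_neg (show ¬ y = (⟨k - 1, by omega⟩ : Fin n) by
        intro h
        apply hy1
        rw [h]
        show k - 1 + 1 = k
        omega), zero_add]
  rw [Finset.sum_congr rfl (fun y _ => hsplit y), Finset.sum_add_distrib]
  congr 1
  · rw [Finset.sum_ite_eq' Finset.univ (⟨k - 1, by omega⟩ : Fin n)
      (fun _ => if q ∣ k then 0 else (Sset (n - k) 1 q).ncard)]
    simp
  · rw [← Finset.sum_filter, Finset.sum_const, smul_eq_mul]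
    congr 1
    rw [← Fintype.card_subtype]
    rw [Fintype.card_congr (phi n k hkN).symm, Fintype.card_fin]

end countrec


section arith

def Cval (q n k : ℕ) : ℤ :=
  if (-(k : ℤ)) % q ≤ (q : ℤ) - 2 - (n : ℤ) % q then 1 else 0

lemma fq_zero (q : ℕ) : fq q 0 = 1 := by simp [fq]

lemma fq_succ (q m : ℕ) :
    (fq q (m + 1) : ℤ) = ((m : ℤ) + 1 - if q ∣ (m + 1) then 1 else 0) * fq q m := by
  by_cases hd : q ∣ (m + 1)
  · have h : fq q (m + 1) = m * fq q m := by
      rw [fq, Finset.prod_Icc_succ_top (by omega), ← fq]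
      simp [hd, mul_comm]
    rw [h, if_pos hd]
    push_cast
    ring
  · have h : fq q (m + 1) = (m + 1) * fq q m := by
      rw [fq, Finset.prod_Icc_succ_top (by omega), ← fq]
      simp [hd, mul_comm]
    rw [h, if_neg hd]
    push_cast
    ring

lemma int_dvd_char {q m e : ℤ} (hq : 0 < q) (h1 : 1 ≤ e) (h2 : e ≤ 2 * q - 1)
    (hcong : q ∣ m - e) : q ∣ m ↔ e = q := by
  constructor
  · intro hm
    have he : q ∣ e := by
      have := dvd_sub hm hcong
      simpa using this
    rcases he with ⟨c, rfl⟩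
    have hc1 : 1 ≤ c := by
      by_contra hc
      push_neg at hc
      have h3 : q * c ≤ q * 0 := mul_le_mul_of_nonneg_left (by omega) (le_of_lt hq)
      rw [mul_zero] at h3
      linarith
    have hc2 : c ≤ 1 := by
      by_contra hc
      push_neg at hc
      have h3 : q * 2 ≤ q * c := mul_le_mul_of_nonneg_left (by omega) (le_of_lt hq)
      linarith
    have hc3 : c = 1 := le_antisymm hc2 hc1
    rw [hc3, mul_one]
  · rintro rfl
    have := dvd_add hcong dvd_rfl
    simpa using this

lemma int_dvd_char' {q m e : ℤ} (hq : 0 < q) (h1 : 0 ≤ e) (h2 : e ≤ 2 * q - 2)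
    (hcong : q ∣ m - e) : q ∣ m ↔ (e = 0 ∨ e = q) := by
  constructor
  · intro hm
    have he : q ∣ e := by
      have := dvd_sub hm hcong
      simpa using this
    rcases he with ⟨c, rfl⟩
    have hc1 : 0 ≤ c := by
      by_contra hc
      push_neg at hc
      have h3 : q * c ≤ q * (-1) := mul_le_mul_of_nonneg_left (by omega) (le_of_lt hq)
      linarith
    have hc2 : c ≤ 1 := by
      by_contra hc
      push_neg at hc
      have h3 : q * 2 ≤ q * c := mul_le_mul_of_nonneg_left (by omega) (le_of_lt hq)
      linarith
    have hc3 : c = 0 ∨ c = 1 := by omega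
    rcases hc3 with rfl | rfl
    · left; ring
    · right; ring
  · rintro (rfl | rfl)
    · simpa using hcong
    · have := dvd_add hcong dvd_rfl
      simpa using this

lemma emod_cong (x : ℤ) (q : ℤ) : q ∣ (x - x % q) :=
  ⟨x / q, by have := Int.emod_def x q; linarith⟩

lemma star (q m k n : ℕ) (hq : 0 < q) (hm : 2 ≤ m) (hk : 1 ≤ k)
    (hn : (n : ℤ) = (m : ℤ) + k - 1) :
    ((if q ∣ k then (1 : ℤ) else 0) - (if q ∣ m then 1 else 0) - Cval q n k)
        * ((m : ℤ) - 1 - (if q ∣ (m - 1) then 1 else 0))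
      + ((m : ℤ) - 1) * Cval q n (k + 1) = 0 := by
  have hqz : (q : ℤ) ≠ 0 := by positivity
  have hqp : (0 : ℤ) < q := by exact_mod_cast hq
  set a := (-(k : ℤ)) % q with ha
  set b := ((n : ℤ)) % q with hb
  set a' := (-(k : ℤ) - 1) % q with ha'
  have ha0 : 0 ≤ a := Int.emod_nonneg _ hqz
  have ha1 : a < q := Int.emod_lt_of_pos _ hqp
  have hb0 : 0 ≤ b := Int.emod_nonneg _ hqz
  have hb1 : b < q := Int.emod_lt_of_pos _ hqp
  have ha'0 : 0 ≤ a' := Int.emod_nonneg _ hqz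
  have ha'1 : a' < q := Int.emod_lt_of_pos _ hqp
  have hacong : (q : ℤ) ∣ (-(k : ℤ) - a) := emod_cong _ _
  have hbcong : (q : ℤ) ∣ ((n : ℤ) - b) := emod_cong _ _
  have ha'cong : (q : ℤ) ∣ (-(k : ℤ) - 1 - a') := emod_cong _ _
  have hqm : q ∣ m ↔ a + b + 1 = (q : ℤ) := by
    rw [← Int.natCast_dvd_natCast]
    apply int_dvd_char hqp (by omega) (by omega)
    have he : (m : ℤ) - (a + b + 1) = ((n : ℤ) - b) + (-(k : ℤ) - a) := by
      rw [hn]; ring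
    rw [he]
    exact dvd_add hbcong hacong
  have hqm1 : q ∣ (m - 1) ↔ (a + b = 0 ∨ a + b = (q : ℤ)) := by
    rw [← Int.natCast_dvd_natCast]
    have hcast : ((m - 1 : ℕ) : ℤ) = (m : ℤ) - 1 := by omega
    rw [hcast]
    apply int_dvd_char' hqp (by omega) (by omega)
    have he : ((m : ℤ) - 1) - (a + b) = ((n : ℤ) - b) + (-(k : ℤ) - a) := by
      rw [hn]; ring
    rw [he]
    exact dvd_add hbcong hacong
  have hqk : q ∣ k ↔ a = 0 := by
    constructor
    · intro h
      have h2 : (q : ℤ) ∣ (-(k : ℤ)) := by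
        rw [dvd_neg]
        exact_mod_cast h
      rw [ha]
      exact Int.emod_eq_zero_of_dvd h2
    · intro h
      have h2 : (q : ℤ) ∣ (-(k : ℤ)) := by
        have h3 := hacong
        rw [h] at h3
        simpa using h3
      rw [dvd_neg] at h2
      exact_mod_cast h2
  have hsplit : (1 ≤ a ∧ a' = a - 1) ∨ (a = 0 ∧ a' = (q : ℤ) - 1) := by
    have hd : (q : ℤ) ∣ (a - 1 - a') := by
      have h1 := dvd_sub hacong ha'cong
      have he : (-(k : ℤ) - a) - (-(k : ℤ) - 1 - a') = a' - a + 1 := by ring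
      rw [he] at h1
      have he2 : a - 1 - a' = -(a' - a + 1) := by ring
      rw [he2]
      exact dvd_neg.mpr h1
    rcases hd with ⟨c, hc⟩
    have hub : (q : ℤ) * c ≤ q - 2 := by linarith
    have hlb : -(q : ℤ) ≤ q * c := by linarith
    have hc0 : c = 0 ∨ c = -1 := by
      by_contra hcc
      push_neg at hcc
      rcases lt_or_gt_of_ne hcc.1 with h3 | h3
      · have h4 : (q : ℤ) * c ≤ q * (-2) := mul_le_mul_of_nonneg_left (by omega) (le_of_lt hqp)
        linarith
      · have h4 : (q : ℤ) * 1 ≤ q * c := mul_le_mul_of_nonneg_left (by omega) (le_of_lt hqp)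
        linarith
    rcases hc0 with rfl | rfl
    · rw [mul_zero] at hc
      left
      omega
    · have hcq : a - 1 - a' = -(q : ℤ) := by linarith [hc]
      right
      omega
  have hCk : Cval q n k = if a ≤ (q : ℤ) - 2 - b then 1 else 0 := by rw [Cval]
  have hCk1 : Cval q n (k + 1) = if a' ≤ (q : ℤ) - 2 - b then 1 else 0 := by
    rw [Cval]
    have hc2 : (-((k + 1 : ℕ) : ℤ)) = (-(k : ℤ) - 1) := by push_cast; ring
    rw [hc2]
  rw [hCk, hCk1]
  simp only [hqm, hqm1, hqk]
  rcases hsplit with ⟨hge, hae⟩ | ⟨hae, hae'⟩ <;>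
    split_ifs <;> ring_nf <;> omega

end arith


section final

lemma neg_one_emod' (q : ℤ) (hq : 0 < q) : (-1 : ℤ) % q = q - 1 := by
  have h : (-1 : ℤ) = (q - 1) + q * (-1) := by ring
  rw [h, Int.add_mul_emod_self_left, Int.emod_eq_of_lt (by linarith) (by linarith)]

lemma Cval_one (q m : ℕ) (hq : 0 < q) : Cval q m 1 = 0 := by
  rw [Cval]
  apply if_neg
  have hqp : (0 : ℤ) < q := by exact_mod_cast hq
  have h1 : (-((1 : ℕ) : ℤ)) % q = (q : ℤ) - 1 := by
    push_cast
    exact neg_one_emod' _ hqp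
  rw [h1]
  have hb0 : (0 : ℤ) ≤ (m : ℤ) % q := Int.emod_nonneg _ (by positivity)
  omega

lemma base_arith (q n : ℕ) (hq : 0 < q) :
    (fq q 1 : ℤ) - Cval q n n * fq q 0 = if q ∣ n then 0 else 1 := by
  have hqp : (0 : ℤ) < q := by exact_mod_cast hq
  have hqz : (q : ℤ) ≠ 0 := by positivity
  have h1 : (fq q 1 : ℤ) = 1 - if q ∣ 1 then 1 else 0 := by
    have h := fq_succ q 0
    rw [fq_zero] at h
    simpa using h
  rw [h1, fq_zero]
  by_cases hq1 : q = 1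
  · subst hq1
    rw [if_pos (one_dvd _), if_pos (one_dvd _), Cval]
    rw [if_neg (by
      simp only [Nat.cast_one, Int.emod_one]
      omega)]
    ring
  · rw [if_neg (show ¬ q ∣ 1 by rw [Nat.dvd_one]; exact hq1)]
    set a := (-(n : ℤ)) % q with ha
    set b := ((n : ℤ)) % q with hb
    have ha0 : 0 ≤ a := Int.emod_nonneg _ hqz
    have ha1 : a < q := Int.emod_lt_of_pos _ hqp
    have hb0 : 0 ≤ b := Int.emod_nonneg _ hqz
    have hb1 : b < q := Int.emod_lt_of_pos _ hqp
    have hacong : (q : ℤ) ∣ (-(n : ℤ) - a) := emod_cong _ _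
    have hbcong : (q : ℤ) ∣ ((n : ℤ) - b) := emod_cong _ _
    have hCval : Cval q n n = if a ≤ (q : ℤ) - 2 - b then 1 else 0 := by rw [Cval]
    rw [hCval]
    by_cases hqn : q ∣ n
    · rw [if_pos hqn]
      have hbz : b = 0 := by
        rw [hb]
        exact Int.emod_eq_zero_of_dvd (by exact_mod_cast hqn)
      have haz : a = 0 := by
        rw [ha]
        exact Int.emod_eq_zero_of_dvd (by rw [dvd_neg]; exact_mod_cast hqn)
      rw [if_pos (by omega : a ≤ (q : ℤ) - 2 - b)]
      ring
    · rw [if_neg hqn]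
      have hbnz : b ≠ 0 := by
        intro hbz
        apply hqn
        have : (q : ℤ) ∣ (n : ℤ) := by
          have := hbcong
          rw [hbz] at this
          simpa using this
        exact_mod_cast this
      have hab : a + b = (q : ℤ) := by
        have hdvd : (q : ℤ) ∣ (a + b) := by
          have h2 := dvd_add hacong hbcong
          have he : (-(n : ℤ) - a) + ((n : ℤ) - b) = -(a + b) := by ring
          rw [he] at h2
          rwa [dvd_neg] at h2
        have := (int_dvd_char hqp (by omega) (by omega) (by simpa using (dvd_refl (0:ℤ)) : (q:ℤ) ∣ (a + b) - (a + b))).mp hdvd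
        exact this
      rw [if_neg (by omega : ¬ a ≤ (q : ℤ) - 2 - b)]
      ring

lemma step_arith (q n k : ℕ) (hq : 0 < q) (hk : 1 ≤ k) (hkn : k < n) :
    (fq q (n - k + 1) : ℤ) - Cval q n k * fq q (n - k)
      = (if q ∣ k then 0 else (fq q (n - k) : ℤ))
        + ((n : ℤ) - k) * ((fq q (n - k) : ℤ) - Cval q n (k + 1) * (fq q (n - k - 1) : ℤ)) := by
  have h0 := fq_succ q (n - k)
  have h1 := fq_succ q (n - k - 1)
  have e2 : n - k - 1 + 1 = n - k := by omega
  rw [e2] at h1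
  have hstar := star q (n - k + 1) k n hq (by omega) hk (by push_cast; omega)
  have e3 : n - k + 1 - 1 = n - k := by omega
  rw [e3] at hstar
  have c1 : ((n - k + 1 : ℕ) : ℤ) = (n : ℤ) - k + 1 := by omega
  have c2 : ((n - k : ℕ) : ℤ) = (n : ℤ) - k := by omega
  have c3 : ((n - k - 1 : ℕ) : ℤ) = (n : ℤ) - k - 1 := by omega
  rw [c2] at h0
  rw [c3] at h1
  rw [c1] at hstar
  have hsw : (if q ∣ k then 0 else (fq q (n - k) : ℤ))
      = (1 - (if q ∣ k then (1 : ℤ) else 0)) * fq q (n - k) := by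
    split_ifs <;> ring
  rw [hsw]
  linear_combination h0 + ((if q ∣ k then (1 : ℤ) else 0) - (if q ∣ (n - k + 1) then (1 : ℤ) else 0) - Cval q n k) * h1 + (fq q (n - k - 1) : ℤ) * hstar

lemma main (q : ℕ) (hq : 0 < q) :
    ∀ d n k : ℕ, 1 ≤ k → k ≤ n → n - k = d →
      ((Sset n k q).ncard : ℤ) = (fq q (n - k + 1) : ℤ) - Cval q n k * fq q (n - k) := by
  intro d
  induction d using Nat.strong_induction_on with
  | _ d ih =>
    intro n k hk hkn hd
    rcases eq_or_lt_of_le hkn with heq | hlt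
    · subst heq
      rw [Sset_base hq (by omega)]
      have e0 : k - k = 0 := by omega
      rw [e0]
      rw [show (0 : ℕ) + 1 = 1 from rfl]
      rw [base_arith q k hq]
      split_ifs <;> simp
    · have hrec := Sset_step hq hk hlt
      have hih1 := ih (n - (k + 1)) (by omega) n (k + 1) (by omega) (by omega) rfl
      have hih2 := ih (n - k - 1) (by omega) (n - k) 1 (by omega) (by omega) (by omega)
      have e1 : n - (k + 1) = n - k - 1 := by omega
      have e2 : n - k - 1 + 1 = n - k := by omega
      rw [e1] at hih1
      rw [show (n - k) - 1 = n - k - 1 from rfl, e2, Cval_one q (n - k) hq, zero_mul, sub_zero]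
        at hih2
      rw [hrec]
      push_cast
      rw [hih1, hih2, e2]
      have c2 : ((n - k : ℕ) : ℤ) = (n : ℤ) - k := by omega
      rw [c2]
      rw [step_arith q n k hq hk hlt]

end final

end Stmt8

theorem stmt_8 (q n k : ℕ) (hq : 0 < q) (hk : 1 ≤ k) (hkn : k ≤ n) :
    ({σ ∈ cosetC n k | NoCycleLenMulOf q σ}.ncard : ℤ) =
      fq q (n - k + 1) -
        (if (-(k : ℤ)) % q ≤ (q : ℤ) - 2 - (n : ℤ) % q then 1 else 0) * fq q (n - k) := by
  have hset : {σ ∈ cosetC n k | NoCycleLenMulOf q σ} = Stmt8.Sset n k q := by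
    ext σ
    simp only [Set.mem_setOf_eq, Stmt8.Sset]
    constructor
    · rintro ⟨h1, h2⟩
      exact ⟨(Stmt8.cosetC_iff_chain hk hkn σ).mp h1, h2⟩
    · rintro ⟨h1, h2⟩
      exact ⟨(Stmt8.cosetC_iff_chain hk hkn σ).mpr h1, h2⟩
  rw [hset, Stmt8.main q hq (n - k) n k hk hkn rfl, Stmt8.Cval]
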